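/- Let X be an n×q real matrix of rank q < n, P = I − X(XᵀX)⁻¹Xᵀ, and let G be the group of transformations g(Y) = X Cᵀ + Y Aᵀ for C ∈ ℝ^{p×q} and nonsingular A ∈ ℝ^{p×p}. Then the map M(Y) = (PY)((PY)ᵀ(PY))⁻(PY)ᵀ is a maximal invariant: M(g(Y)) = M(Y) for all g ∈ G, and M(Y₁) = M(Y) implies Y₁ = g(Y) for some g ∈ G. -/

import Mathlib

open Matrix Module


/-- The four Penrose conditions characterizing the Moore–Penrose pseudoinverse. -/
def IsMoorePenrose {m n : Type*} [Fintype m] [Fintype n]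
    (A : Matrix m n ℝ) (Ap : Matrix n m ℝ) : Prop :=
  A * Ap * A = A ∧ Ap * A * Ap = Ap ∧ (A * Ap)ᵀ = A * Ap ∧ (Ap * A)ᵀ = Ap * A

lemma mp_unique {m k : Type*} [Fintype m] [Fintype k] {A : Matrix m k ℝ}
    {G H : Matrix k m ℝ} (hG : IsMoorePenrose A G) (hH : IsMoorePenrose A H) : G = H := by
  obtain ⟨hG1, hG2, hG3, hG4⟩ := hG
  obtain ⟨hH1, hH2, hH3, hH4⟩ := hH
  have hH1' : A * (H * A) = A := by rw [← Matrix.mul_assoc, hH1]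
  have hG1' : A * (G * A) = A := by rw [← Matrix.mul_assoc, hG1]
  have hAG : A * G = A * H := by
    calc A * G = (A * G)ᵀ := hG3.symm
    _ = Gᵀ * Aᵀ := by rw [transpose_mul]
    _ = Gᵀ * (A * (H * A))ᵀ := by rw [hH1']
    _ = (A * G)ᵀ * (A * H)ᵀ := by simp only [transpose_mul, Matrix.mul_assoc]
    _ = (A * G) * (A * H) := by rw [hG3, hH3]
    _ = (A * G * A) * H := by simp only [Matrix.mul_assoc]
    _ = A * H := by rw [hG1]
  have hGA : G * A = H * A := by
    calc G * A = (G * A)ᵀ := hG4.symm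
    _ = Aᵀ * Gᵀ := by rw [transpose_mul]
    _ = (A * (H * A))ᵀ * Gᵀ := by rw [hH1']
    _ = (H * A)ᵀ * (G * A)ᵀ := by simp only [transpose_mul, Matrix.mul_assoc]
    _ = (H * A) * (G * A) := by rw [hH4, hG4]
    _ = H * (A * (G * A)) := by simp only [Matrix.mul_assoc]
    _ = H * A := by rw [hG1']
  calc G = G * A * G := hG2.symm
  _ = H * A * G := by rw [hGA]
  _ = H * (A * G) := by rw [Matrix.mul_assoc]
  _ = H * (A * H) := by rw [hAG]
  _ = H * A * H := by rw [Matrix.mul_assoc]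
  _ = H := hH2

lemma mp_symm {k : Type*} [Fintype k] {S : Matrix k k ℝ} (hS : Sᵀ = S)
    {G : Matrix k k ℝ} (hG : IsMoorePenrose S G) : Gᵀ = G := by
  obtain ⟨h1, h2, h3, h4⟩ := hG
  have hmp : IsMoorePenrose S Gᵀ := by
    refine ⟨?_, ?_, ?_, ?_⟩
    · have : Sᵀ * Gᵀ * Sᵀ = Sᵀ := by
        calc Sᵀ * Gᵀ * Sᵀ = (S * (G * S))ᵀ := by simp only [transpose_mul, Matrix.mul_assoc]
        _ = (S * G * S)ᵀ := by rw [Matrix.mul_assoc]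
        _ = Sᵀ := by rw [h1]
      rwa [hS] at this
    · have : Gᵀ * Sᵀ * Gᵀ = Gᵀ := by
        calc Gᵀ * Sᵀ * Gᵀ = (G * (S * G))ᵀ := by simp only [transpose_mul, Matrix.mul_assoc]
        _ = (G * S * G)ᵀ := by rw [Matrix.mul_assoc]
        _ = Gᵀ := by rw [h2]
      rwa [hS] at this
    · calc (S * Gᵀ)ᵀ = G * Sᵀ := by rw [transpose_mul, transpose_transpose]
      _ = G * S := by rw [hS]
      _ = (G * S)ᵀ := h4.symm
      _ = Sᵀ * Gᵀ := by rw [transpose_mul]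
      _ = S * Gᵀ := by rw [hS]
    · calc (Gᵀ * S)ᵀ = Sᵀ * G := by rw [transpose_mul, transpose_transpose]
      _ = S * G := by rw [hS]
      _ = (S * G)ᵀ := h3.symm
      _ = Gᵀ * Sᵀ := by rw [transpose_mul]
      _ = Gᵀ * S := by rw [hS]
  exact mp_unique hmp ⟨h1, h2, h3, h4⟩

lemma tmul_self_eq_zero {m k : Type*} [Fintype m] [Fintype k] {N : Matrix m k ℝ}
    (h : Nᵀ * N = 0) : N = 0 := by
  have hc : Nᴴ = Nᵀ := Matrix.ext fun i j => by simp [Matrix.conjTranspose_apply]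
  rw [← hc] at h
  exact Matrix.conjTranspose_mul_self_eq_zero.mp h

lemma mp_cancel {m k : Type*} [Fintype m] [Fintype k] (B : Matrix m k ℝ)
    {G : Matrix k k ℝ} (hG : IsMoorePenrose (Bᵀ * B) G) : B * (G * (Bᵀ * B)) = B := by
  have hSt : (Bᵀ * B)ᵀ = Bᵀ * B := by rw [transpose_mul, transpose_transpose]
  have hGs : Gᵀ = G := mp_symm hSt hG
  have h1' : Bᵀ * (B * (G * (Bᵀ * B))) = Bᵀ * B := by
    simpa only [Matrix.mul_assoc] using hG.1
  have key : (Bᵀ * (B * (G * Bᵀ)) - Bᵀ) * (B * (G * (Bᵀ * B)) - B) = 0 := by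
    simp only [Matrix.sub_mul, Matrix.mul_sub, Matrix.mul_assoc, h1', sub_self]
  have hT : (B * (G * (Bᵀ * B)) - B)ᵀ = Bᵀ * (B * (G * Bᵀ)) - Bᵀ := by
    simp only [transpose_sub, transpose_mul, transpose_transpose, hGs, Matrix.mul_assoc]
  have hz : B * (G * (Bᵀ * B)) - B = 0 := tmul_self_eq_zero (by rw [hT]; exact key)
  exact sub_eq_zero.mp hz


lemma exists_equiv_comp {n p : ℕ} (f g : (Fin n → ℝ) →ₗ[ℝ] (Fin p → ℝ))
    (hker : LinearMap.ker f = LinearMap.ker g) :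
    ∃ e : (Fin p → ℝ) ≃ₗ[ℝ] (Fin p → ℝ), ∀ v, e (f v) = g v := by
  obtain ⟨Uf, hUf⟩ := (LinearMap.range f).exists_isCompl
  obtain ⟨Ug, hUg⟩ := (LinearMap.range g).exists_isCompl
  let e₀ : LinearMap.range f ≃ₗ[ℝ] LinearMap.range g :=
    f.quotKerEquivRange.symm.trans ((Submodule.quotEquivOfEq _ _ hker).trans g.quotKerEquivRange)
  have he₀ : ∀ v, (e₀ ⟨f v, LinearMap.mem_range_self f v⟩ : Fin p → ℝ) = g v := by
    intro v
    have h1 : f.quotKerEquivRange.symm ⟨f v, LinearMap.mem_range_self f v⟩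
        = Submodule.Quotient.mk v := f.quotKerEquivRange_symm_apply_image v _
    simp only [e₀, LinearEquiv.trans_apply, h1, Submodule.quotEquivOfEq_mk,
      LinearMap.quotKerEquivRange_apply_mk]
  have hfr : finrank ℝ Uf = finrank ℝ Ug := by
    have h1 := Submodule.finrank_add_eq_of_isCompl hUf
    have h2 := Submodule.finrank_add_eq_of_isCompl hUg
    have h3 : finrank ℝ (LinearMap.range f) = finrank ℝ (LinearMap.range g) :=
      e₀.finrank_eq
    omega
  let e₁ : Uf ≃ₗ[ℝ] Ug := LinearEquiv.ofFinrankEq _ _ hfr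
  refine ⟨(Submodule.prodEquivOfIsCompl _ _ hUf).symm.trans
    ((e₀.prodCongr e₁).trans (Submodule.prodEquivOfIsCompl _ _ hUg)), fun v => ?_⟩
  have h2 : (Submodule.prodEquivOfIsCompl _ _ hUf).symm (f v)
      = ((⟨f v, LinearMap.mem_range_self f v⟩ : LinearMap.range f), 0) :=
    Submodule.prodEquivOfIsCompl_symm_apply_left _ _ hUf
      (⟨f v, LinearMap.mem_range_self f v⟩ : LinearMap.range f)
  simp only [LinearEquiv.trans_apply, h2, LinearEquiv.prodCongr_apply, map_zero,
    Submodule.coe_prodEquivOfIsCompl', Submodule.coe_zero, add_zero, he₀]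

/-- `M(Y) = (PY)((PY)ᵀ(PY))⁻(PY)ᵀ` is a maximal invariant for the group of
transformations `g(Y) = X Cᵀ + Y Aᵀ` with `A` nonsingular:
it is invariant, and equality of values implies equivalence under the group. -/
theorem stmt2 {n p q : ℕ} (X : Matrix (Fin n) (Fin q) ℝ)
    (hq : q < n) (hX : X.rank = q) :
    let P := (1 : Matrix (Fin n) (Fin n) ℝ) - X * (Xᵀ * X)⁻¹ * Xᵀ
    (∀ (Y : Matrix (Fin n) (Fin p) ℝ) (C : Matrix (Fin p) (Fin q) ℝ)
        (A : Matrix (Fin p) (Fin p) ℝ), A.det ≠ 0 →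
        ∀ (G₁ G₂ : Matrix (Fin p) (Fin p) ℝ),
          IsMoorePenrose ((P * Y)ᵀ * (P * Y)) G₁ →
          IsMoorePenrose ((P * (X * Cᵀ + Y * Aᵀ))ᵀ * (P * (X * Cᵀ + Y * Aᵀ))) G₂ →
          (P * (X * Cᵀ + Y * Aᵀ)) * G₂ * (P * (X * Cᵀ + Y * Aᵀ))ᵀ
            = (P * Y) * G₁ * (P * Y)ᵀ)
    ∧
    (∀ (Y Y₁ : Matrix (Fin n) (Fin p) ℝ) (G₁ G₂ : Matrix (Fin p) (Fin p) ℝ),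
        IsMoorePenrose ((P * Y)ᵀ * (P * Y)) G₁ →
        IsMoorePenrose ((P * Y₁)ᵀ * (P * Y₁)) G₂ →
        (P * Y₁) * G₂ * (P * Y₁)ᵀ = (P * Y) * G₁ * (P * Y)ᵀ →
        ∃ (C : Matrix (Fin p) (Fin q) ℝ) (A : Matrix (Fin p) (Fin p) ℝ),
          A.det ≠ 0 ∧ Y₁ = X * Cᵀ + Y * Aᵀ) := by
  intro P
  have hP : P = 1 - X * (Xᵀ * X)⁻¹ * Xᵀ := rfl
  have hUnit : IsUnit (Xᵀ * X).det := by
    have hr : (Xᵀ * X).rank = q := by rw [Matrix.rank_transpose_mul_self, hX]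
    have htop : LinearMap.range (Xᵀ * X).mulVecLin = ⊤ := by
      apply Submodule.eq_top_of_finrank_eq
      rw [show finrank ℝ (LinearMap.range (Xᵀ * X).mulVecLin) = (Xᵀ * X).rank from rfl, hr,
        Module.finrank_fin_fun]
    have hsurj : Function.Surjective (Xᵀ * X).mulVec := by
      rw [← Matrix.coe_mulVecLin]
      exact LinearMap.range_eq_top.mp htop
    exact (Matrix.isUnit_iff_isUnit_det _).mp (Matrix.mulVec_surjective_iff_isUnit.mp hsurj)
  have hPX : P * X = 0 := by
    rw [hP, Matrix.sub_mul, Matrix.one_mul]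
    simp only [Matrix.mul_assoc]
    rw [Matrix.nonsing_inv_mul _ hUnit, Matrix.mul_one, sub_self]
  constructor
  · intro Y C A hA G₁ G₂ h1 h2
    have hAd : IsUnit Aᵀ.det := by rw [Matrix.det_transpose]; exact Ne.isUnit hA
    have hPg : P * (X * Cᵀ + Y * Aᵀ) = P * Y * Aᵀ := by
      rw [Matrix.mul_add, ← Matrix.mul_assoc, hPX, Matrix.zero_mul, zero_add, Matrix.mul_assoc]
    rw [hPg] at h2 ⊢
    set B := P * Y with hB
    have c1 : B * G₁ * Bᵀ * B = B := by
      simpa only [Matrix.mul_assoc] using mp_cancel B h1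
    have c2 : B * Aᵀ * G₂ * (B * Aᵀ)ᵀ * (B * Aᵀ) = B * Aᵀ := by
      simpa only [Matrix.mul_assoc] using mp_cancel (B * Aᵀ) h2
    have c2' : B * Aᵀ * G₂ * (B * Aᵀ)ᵀ * B = B := by
      have h := congrArg (· * (Aᵀ)⁻¹) c2
      simpa only [Matrix.mul_assoc, Matrix.mul_nonsing_inv _ hAd, Matrix.mul_one] using h
    have hSt : (Bᵀ * B)ᵀ = Bᵀ * B := by rw [transpose_mul, transpose_transpose]
    have hG₁s : G₁ᵀ = G₁ := mp_symm hSt h1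
    have hSt2 : ((B * Aᵀ)ᵀ * (B * Aᵀ))ᵀ = (B * Aᵀ)ᵀ * (B * Aᵀ) := by
      rw [transpose_mul, transpose_transpose]
    have hG₂s : G₂ᵀ = G₂ := mp_symm hSt2 h2
    have hs1 : (B * G₁ * Bᵀ)ᵀ = B * G₁ * Bᵀ := by
      simp only [transpose_mul, transpose_transpose, hG₁s, Matrix.mul_assoc]
    have hs2 : (B * Aᵀ * G₂ * (B * Aᵀ)ᵀ)ᵀ = B * Aᵀ * G₂ * (B * Aᵀ)ᵀ := by
      simp only [transpose_mul, transpose_transpose, hG₂s, Matrix.mul_assoc]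
    have e1 : (B * Aᵀ * G₂ * (B * Aᵀ)ᵀ) * (B * G₁ * Bᵀ) = B * G₁ * Bᵀ := by
      calc (B * Aᵀ * G₂ * (B * Aᵀ)ᵀ) * (B * G₁ * Bᵀ)
          = (B * Aᵀ * G₂ * (B * Aᵀ)ᵀ * B) * (G₁ * Bᵀ) := by simp only [Matrix.mul_assoc]
        _ = B * G₁ * Bᵀ := by rw [c2', ← Matrix.mul_assoc]
    have e2 : (B * G₁ * Bᵀ) * (B * Aᵀ * G₂ * (B * Aᵀ)ᵀ) = B * Aᵀ * G₂ * (B * Aᵀ)ᵀ := by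
      calc (B * G₁ * Bᵀ) * (B * Aᵀ * G₂ * (B * Aᵀ)ᵀ)
          = (B * G₁ * Bᵀ * B) * (Aᵀ * G₂ * (B * Aᵀ)ᵀ) := by simp only [Matrix.mul_assoc]
        _ = B * Aᵀ * G₂ * (B * Aᵀ)ᵀ := by rw [c1]; simp only [Matrix.mul_assoc]
    calc B * Aᵀ * G₂ * (B * Aᵀ)ᵀ = (B * Aᵀ * G₂ * (B * Aᵀ)ᵀ)ᵀ := hs2.symm
      _ = ((B * G₁ * Bᵀ) * (B * Aᵀ * G₂ * (B * Aᵀ)ᵀ))ᵀ := by rw [e2]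
      _ = (B * Aᵀ * G₂ * (B * Aᵀ)ᵀ)ᵀ * (B * G₁ * Bᵀ)ᵀ := by rw [transpose_mul]
      _ = (B * Aᵀ * G₂ * (B * Aᵀ)ᵀ) * (B * G₁ * Bᵀ) := by rw [hs1, hs2]
      _ = B * G₁ * Bᵀ := e1
  · intro Y Y₁ G₁ G₂ h1 h2 hM
    set B := P * Y with hB
    set B₁ := P * Y₁ with hB₁
    have c1 : B * G₁ * Bᵀ * B = B := by
      simpa only [Matrix.mul_assoc] using mp_cancel B h1
    have c2 : B₁ * G₂ * B₁ᵀ * B₁ = B₁ := by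
      simpa only [Matrix.mul_assoc] using mp_cancel B₁ h2
    have hK : B₁ = B * (G₁ * (Bᵀ * B₁)) := by
      calc B₁ = B₁ * G₂ * B₁ᵀ * B₁ := c2.symm
        _ = (B * G₁ * Bᵀ) * B₁ := by rw [hM]
        _ = B * (G₁ * (Bᵀ * B₁)) := by simp only [Matrix.mul_assoc]
    have hK' : B = B₁ * (G₂ * (B₁ᵀ * B)) := by
      calc B = B * G₁ * Bᵀ * B := c1.symm
        _ = (B₁ * G₂ * B₁ᵀ) * B := by rw [hM]
        _ = B₁ * (G₂ * (B₁ᵀ * B)) := by simp only [Matrix.mul_assoc]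
    have hker : LinearMap.ker (Bᵀ.mulVecLin) = LinearMap.ker (B₁ᵀ.mulVecLin) := by
      apply le_antisymm
      · intro v hv
        have hv' : Bᵀ *ᵥ v = 0 := hv
        have hfac : B₁ᵀ = (G₁ * (Bᵀ * B₁))ᵀ * Bᵀ := by rw [← transpose_mul, ← hK]
        show B₁ᵀ *ᵥ v = 0
        rw [hfac, ← Matrix.mulVec_mulVec, hv', Matrix.mulVec_zero]
      · intro v hv
        have hv' : B₁ᵀ *ᵥ v = 0 := hv
        have hfac : Bᵀ = (G₂ * (B₁ᵀ * B))ᵀ * B₁ᵀ := by rw [← transpose_mul, ← hK']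
        show Bᵀ *ᵥ v = 0
        rw [hfac, ← Matrix.mulVec_mulVec, hv', Matrix.mulVec_zero]
    obtain ⟨e, he⟩ := exists_equiv_comp _ _ hker
    set A := LinearMap.toMatrix' (e : (Fin p → ℝ) →ₗ[ℝ] (Fin p → ℝ)) with hAdef
    have hAmul : ∀ v, A *ᵥ v = e v := by
      intro v
      rw [hAdef, ← Matrix.toLin'_apply, Matrix.toLin'_toMatrix']
      rfl
    have hABt : A * Bᵀ = B₁ᵀ := by
      have hpt : ∀ v, (A * Bᵀ) *ᵥ v = B₁ᵀ *ᵥ v := by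
        intro v
        rw [← Matrix.mulVec_mulVec, hAmul]
        exact he v
      have h' : (A * Bᵀ).mulVecLin = B₁ᵀ.mulVecLin := LinearMap.ext hpt
      calc A * Bᵀ = LinearMap.toMatrix' (Matrix.toLin' (A * Bᵀ)) :=
            (LinearMap.toMatrix'_toLin' _).symm
        _ = LinearMap.toMatrix' (Matrix.toLin' B₁ᵀ) := by
            rw [Matrix.toLin'_apply', Matrix.toLin'_apply', h']
        _ = B₁ᵀ := LinearMap.toMatrix'_toLin' _
    have hdet : A.det ≠ 0 := by
      have hcomp : (e : (Fin p → ℝ) →ₗ[ℝ] (Fin p → ℝ)).comp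
          (e.symm : (Fin p → ℝ) →ₗ[ℝ] (Fin p → ℝ)) = LinearMap.id := by
        ext v
        simp
      have hinv : A * LinearMap.toMatrix' (e.symm : (Fin p → ℝ) →ₗ[ℝ] (Fin p → ℝ)) = 1 := by
        rw [hAdef, ← LinearMap.toMatrix'_comp, hcomp, LinearMap.toMatrix'_id]
      intro h0
      have hd := congrArg Matrix.det hinv
      rw [Matrix.det_mul, h0, zero_mul, Matrix.det_one] at hd
      exact zero_ne_one hd
    have hBA : B * Aᵀ = B₁ := by
      calc B * Aᵀ = (A * Bᵀ)ᵀ := by rw [transpose_mul, transpose_transpose]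
        _ = B₁ := by rw [hABt, transpose_transpose]
    have hPZ : P * (Y₁ - Y * Aᵀ) = 0 := by
      rw [Matrix.mul_sub, ← Matrix.mul_assoc, ← hB, ← hB₁, hBA, sub_self]
    refine ⟨((Xᵀ * X)⁻¹ * (Xᵀ * (Y₁ - Y * Aᵀ)))ᵀ, A, hdet, ?_⟩
    rw [transpose_transpose]
    have hXZ : X * ((Xᵀ * X)⁻¹ * (Xᵀ * (Y₁ - Y * Aᵀ))) = Y₁ - Y * Aᵀ := by
      have h0 : (Y₁ - Y * Aᵀ) - X * (Xᵀ * X)⁻¹ * Xᵀ * (Y₁ - Y * Aᵀ) = 0 := by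
        simpa only [hP, Matrix.sub_mul, Matrix.one_mul] using hPZ
      have h1 := sub_eq_zero.mp h0
      simpa only [Matrix.mul_assoc] using h1.symm
    rw [hXZ]
    abel
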